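/- For every k ≥ 2 there is a constant C_k such that the number of pairs (A, B) of distinct k-element subsets of {1,…,N} satisfying A + A = A + B or A + A = B + B is at most C_k · N^k. -/

import Mathlib

open Finset Pointwise

theorem count_C2_upper (k : ℕ) (hk : 2 ≤ k) :
    ∃ C : ℝ, 0 < C ∧ ∀ N : ℕ,
      (((((Finset.Icc (1 : ℤ) N).powersetCard k) ×ˢ ((Finset.Icc (1 : ℤ) N).powersetCard k)).filter
        (fun p => p.1 ≠ p.2 ∧ (p.1 + p.1 = p.1 + p.2 ∨ p.1 + p.1 = p.2 + p.2))).card : ℝ) ≤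
        C * (N : ℝ) ^ k := by
  classical
  refine ⟨((k*k).choose k : ℝ) + 1, by positivity, fun N => ?_⟩
  set m : Finset ℤ → ℤ := fun A => WithTop.untopD 0 A.min with hm
  have hmmin : ∀ (A : Finset ℤ), A.Nonempty → (m A ∈ A ∧ ∀ a ∈ A, m A ≤ a) := by
    intro A hA
    have : m A = A.min' hA := by
      simp only [hm]
      rw [← Finset.coe_min' hA, WithTop.untopD_coe]
    rw [this]
    exact ⟨A.min'_mem hA, fun a ha => A.min'_le a ha⟩
  set P := (Finset.Icc (1 : ℤ) N).powersetCard k with hP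
  set F := (P ×ˢ P).filter
      (fun p => p.1 ≠ p.2 ∧ (p.1 + p.1 = p.1 + p.2 ∨ p.1 + p.1 = p.2 + p.2)) with hF
  have hsub : F ⊆ P.biUnion
      (fun A => {A} ×ˢ (((A+A).image (fun x => x - m A)).powersetCard k)) := by
    intro p hp
    simp only [hF, Finset.mem_filter, Finset.mem_product] at hp
    obtain ⟨⟨h1, h2⟩, hne, hcase⟩ := hp
    rw [Finset.mem_biUnion]
    refine ⟨p.1, h1, ?_⟩
    rw [Finset.mem_product]
    refine ⟨Finset.mem_singleton_self _, ?_⟩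
    rw [Finset.mem_powersetCard]
    have hk1 : p.1.card = k := (Finset.mem_powersetCard.mp h1).2
    have hk2 : p.2.card = k := (Finset.mem_powersetCard.mp h2).2
    have hA : p.1.Nonempty := Finset.card_pos.mp (by omega)
    have hB : p.2.Nonempty := Finset.card_pos.mp (by omega)
    refine ⟨?_, hk2⟩
    intro b hb
    rw [Finset.mem_image]
    refine ⟨b + m p.1, ?_, by ring⟩
    obtain ⟨hm1, hm1le⟩ := hmmin p.1 hA
    obtain ⟨hm2, hm2le⟩ := hmmin p.2 hB
    rcases hcase with h | h
    · have hx : m p.1 + b ∈ p.1 + p.2 := Finset.add_mem_add hm1 hb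
      rw [← h] at hx
      simpa [add_comm] using hx
    · have hmeq : m p.2 = m p.1 := by
        have e1 : m p.2 + m p.2 ∈ p.1 + p.1 := h ▸ Finset.add_mem_add hm2 hm2
        have e2 : m p.1 + m p.1 ∈ p.2 + p.2 := by
          rw [← h]; exact Finset.add_mem_add hm1 hm1
        obtain ⟨a1, ha1, a2, ha2, hsum⟩ := Finset.mem_add.mp e1
        obtain ⟨b1, hb1, b2, hb2, hsum'⟩ := Finset.mem_add.mp e2
        have i1 := hm1le a1 ha1
        have i2 := hm1le a2 ha2
        have i3 := hm2le b1 hb1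
        have i4 := hm2le b2 hb2
        omega
      have hx : m p.2 + b ∈ p.2 + p.2 := Finset.add_mem_add hm2 hb
      rw [← h, hmeq] at hx
      simpa [add_comm] using hx
  have h1 : F.card ≤ P.card * (k*k).choose k := by
    calc F.card ≤ (P.biUnion
        (fun A => {A} ×ˢ (((A+A).image (fun x => x - m A)).powersetCard k))).card :=
          Finset.card_le_card hsub
      _ ≤ ∑ A ∈ P, ({A} ×ˢ (((A+A).image (fun x => x - m A)).powersetCard k)).card :=
          Finset.card_biUnion_le
      _ ≤ ∑ _A ∈ P, (k*k).choose k := by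
          apply Finset.sum_le_sum
          intro A hA
          rw [Finset.card_product, Finset.card_singleton, one_mul,
            Finset.card_powersetCard]
          apply Nat.choose_le_choose
          calc ((A+A).image (fun x => x - m A)).card ≤ (A+A).card :=
                Finset.card_image_le
            _ ≤ A.card * A.card := Finset.card_add_le
            _ = k*k := by rw [(Finset.mem_powersetCard.mp hA).2]
      _ = P.card * (k*k).choose k := by
          rw [Finset.sum_const, smul_eq_mul]
  have h2 : P.card ≤ N ^ k := by
    rw [hP, Finset.card_powersetCard]
    have : (Finset.Icc (1 : ℤ) N).card = N := by
      rw [Int.card_Icc]; omega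
    rw [this]
    exact Nat.choose_le_pow N k
  have h3 : F.card ≤ N ^ k * (k*k).choose k :=
    h1.trans (Nat.mul_le_mul_right _ h2)
  calc (F.card : ℝ) ≤ ((N ^ k * (k*k).choose k : ℕ) : ℝ) := by exact_mod_cast h3
    _ = ((k*k).choose k : ℝ) * (N : ℝ) ^ k := by push_cast; ring
    _ ≤ (((k*k).choose k : ℝ) + 1) * (N : ℝ) ^ k := by
        have : (0:ℝ) ≤ (N:ℝ)^k := by positivity
        nlinarith
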